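/- Let Π be a set of permutation patterns, each of length at most k, and let τ be a permutation of length n. Let X be any set of at least min(k+1, n) distinct letters (values) of τ. Then τ avoids Π if and only if both of the following hold: (1) τ is not itself an element of Π, and (2) for each letter x ∈ X, the standardization of the word obtained from τ by deleting the letter x avoids Π. -/

import Mathlib

/-- `w` is a permutation of `{1,…,n}`, viewed as a word containing each of `1,…,n` exactly once. -/
def IsPermWord (n : ℕ) (w : List ℕ) : Prop := w.Perm (List.range' 1 n)

/-- The standardization of a word `w` of distinct letters: each letter is replaced by its rank. -/
def stdize (w : List ℕ) : List ℕ := w.map fun x => (w.filter fun y => decide (y ≤ x)).length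

/-- `τ` avoids the set of patterns `P`: no nonempty subsequence of `τ` standardizes to a pattern. -/
def AvoidsSet (P : Set (List ℕ)) (τ : List ℕ) : Prop :=
  ∀ u : List ℕ, u.Sublist τ → u ≠ [] → stdize u ∉ P

/-- The rank function of a word. -/
def rnk (w : List ℕ) (x : ℕ) : ℕ := (w.filter fun y => decide (y ≤ x)).length

lemma stdize_eq_map_rnk (w : List ℕ) : stdize w = w.map (rnk w) := rfl

lemma rnk_mono (w : List ℕ) {x y : ℕ} (h : y ≤ x) : rnk w y ≤ rnk w x := by
  apply List.Sublist.length_le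
  apply List.monotone_filter_right
  intro z _
  simp only [decide_eq_true_eq] at *
  omega

lemma rnk_le_iff (w : List ℕ) {x y : ℕ} (hx : x ∈ w) (hy : y ∈ w) :
    rnk w y ≤ rnk w x ↔ y ≤ x := by
  constructor
  · intro h
    by_contra hxy
    push_neg at hxy
    -- x < y, show rnk w x < rnk w y
    have hsub : (w.filter fun z => decide (z ≤ x)).Sublist (w.filter fun z => decide (z ≤ y)) := by
      apply List.monotone_filter_right
      intro z _
      simp only [decide_eq_true_eq] at *
      omega
    have hne : (w.filter fun z => decide (z ≤ x)) ≠ (w.filter fun z => decide (z ≤ y)) := by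
      intro he
      have h1 : y ∈ w.filter fun z => decide (z ≤ y) := by
        simp [List.mem_filter, hy]
      rw [← he] at h1
      simp only [List.mem_filter, decide_eq_true_eq] at h1
      omega
    have := hsub.length_le
    have : rnk w x ≠ rnk w y := fun hl => hne (hsub.eq_of_length hl)
    unfold rnk at *
    omega
  · exact rnk_mono w

lemma stdize_map_rnk (w u : List ℕ) (hu : ∀ a ∈ u, a ∈ w) :
    stdize (u.map (rnk w)) = stdize u := by
  unfold stdize
  rw [List.map_map]
  apply List.map_congr_left
  intro x hxu
  simp only [Function.comp_apply]
  rw [List.filter_map]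
  rw [List.length_map]
  congr 1
  apply List.filter_congr
  intro y hyu
  simp only [Function.comp_apply, decide_eq_decide]
  exact rnk_le_iff w (hu x hxu) (hu y hyu)

lemma rnk_perm_eq (n : ℕ) (τ : List ℕ) (hτ : IsPermWord n τ) {x : ℕ} (hx : x ∈ τ) :
    rnk τ x = x := by
  have hxr : x ∈ List.range' 1 n := hτ.mem_iff.mp hx
  rw [List.mem_range'_1] at hxr
  obtain ⟨h1, h2⟩ := hxr
  unfold rnk
  have hperm : (τ.filter fun y => decide (y ≤ x)).Perm
      ((List.range' 1 n).filter fun y => decide (y ≤ x)) := hτ.filter _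
  rw [hperm.length_eq]
  have hsplit : List.range' 1 x ++ List.range' (1 + x) (n - x) = List.range' 1 n := by
    have := @List.range'_append 1 x (n - x) 1
    simp only [one_mul] at this
    rw [this]
    congr 1
    omega
  rw [← hsplit, List.filter_append]
  have h3 : (List.range' 1 x).filter (fun y => decide (y ≤ x)) = List.range' 1 x := by
    apply List.filter_eq_self.mpr
    intro a ha
    rw [List.mem_range'_1] at ha
    simp only [decide_eq_true_eq]
    omega
  have h4 : (List.range' (1 + x) (n - x)).filter (fun y => decide (y ≤ x)) = [] := by
    apply List.filter_eq_nil_iff.mpr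
    intro a ha
    rw [List.mem_range'_1] at ha
    simp only [decide_eq_true_eq]
    omega
  rw [h3, h4]
  simp

lemma stdize_perm (n : ℕ) (τ : List ℕ) (hτ : IsPermWord n τ) : stdize τ = τ := by
  rw [stdize_eq_map_rnk]
  conv_rhs => rw [← List.map_id τ]
  apply List.map_congr_left
  intro x hx
  exact rnk_perm_eq n τ hτ hx

/-- Proposition 1 of the paper. -/
theorem statement0 (P : Set (List ℕ)) (k : ℕ)
    (hP : ∀ π ∈ P, IsPermWord π.length π ∧ 1 ≤ π.length ∧ π.length ≤ k)
    (n : ℕ) (τ : List ℕ) (hτ : IsPermWord n τ)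
    (X : Finset ℕ) (hX : ∀ x ∈ X, x ∈ τ) (hcard : min (k + 1) n ≤ X.card) :
    AvoidsSet P τ ↔ (τ ∉ P ∧ ∀ x ∈ X, AvoidsSet P (stdize (τ.erase x))) := by
  have hnodup : τ.Nodup := hτ.nodup_iff.mpr List.nodup_range'
  constructor
  · intro hA
    constructor
    · intro hτP
      obtain ⟨_, hlen, _⟩ := hP τ hτP
      have hne : τ ≠ [] := by intro h; rw [h] at hlen; simp at hlen
      exact hA τ (List.Sublist.refl τ) hne (by rwa [stdize_perm n τ hτ])
    · intro x _ u hu hune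
      set w := τ.erase x with hw
      rw [stdize_eq_map_rnk] at hu
      obtain ⟨v, hv, rfl⟩ := List.sublist_map_iff.mp hu
      have hvw : ∀ a ∈ v, a ∈ w := fun a ha => hv.mem ha
      rw [stdize_map_rnk w v hvw]
      have hvne : v ≠ [] := by
        intro h; rw [h] at hune; exact hune rfl
      exact hA v (hv.trans List.erase_sublist) hvne
  · rintro ⟨hτP, hE⟩ u hu hune hstdP
    obtain ⟨_, _, hlenk⟩ := hP _ hstdP
    rw [stdize_eq_map_rnk, List.length_map] at hlenk
    have hlen_lt : u.length < n := by
      rcases lt_or_eq_of_le hu.length_le with h | h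
      · rwa [hτ.length_eq, List.length_range'] at h
      · exfalso
        have : u = τ := hu.eq_of_length h
        subst this
        rw [stdize_perm n u hτ] at hstdP
        exact hτP hstdP
    have hcard' : u.length < X.card := by
      have : u.length < min (k + 1) n := by omega
      omega
    -- find x ∈ X not in u
    have hund : u.Nodup := hu.nodup hnodup
    have : ∃ x ∈ X, x ∉ u := by
      by_contra h
      push_neg at h
      have hsub : X ⊆ u.toFinset := fun x hx => List.mem_toFinset.mpr (h x hx)
      have := Finset.card_le_card hsub
      rw [List.toFinset_card_of_nodup hund] at this
      omega
    obtain ⟨x, hxX, hxu⟩ := this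
    -- u is a sublist of τ.erase x
    have herase : u.Sublist (τ.erase x) := by
      rw [hnodup.erase_eq_filter x]
      have : u = u.filter (fun y => y != x) := by
        symm
        apply List.filter_eq_self.mpr
        intro a ha
        simp only [bne_iff_ne, ne_eq]
        intro h; subst h; exact hxu ha
      rw [this]
      exact hu.filter _
    set w := τ.erase x with hw
    have hmap : (u.map (rnk w)).Sublist (stdize w) := by
      rw [stdize_eq_map_rnk]
      exact herase.map (rnk w)
    have hmapne : u.map (rnk w) ≠ [] := by
      simp only [ne_eq, List.map_eq_nil_iff]
      exact hune
    apply hE x hxX (u.map (rnk w)) hmap hmapne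
    rw [stdize_map_rnk w u (fun a ha => herase.mem ha)]
    exact hstdP
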